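/- arXiv:1808.08797 — 11 statements merged into one kernel-verified Lean document; each statement's English description precedes it below -/
import Mathlib

section
/- If A is a d-by-d matrix with nonnegative real entries such that the sum A_{1,σ(1)} + ... + A_{d,σ(d)} equals N for every permutation σ of {1,...,d}, then there exist nonnegative reals λ_1,...,λ_d and μ_1,...,μ_d with λ_1+...+λ_d+μ_1+...+μ_d = N such that A_{ij} = μ_i + λ_j for all i,j. -/
theorem stmt_0 (d : ℕ) (hd : 2 ≤ d) (N : ℝ) (hN : 0 ≤ N)
    (A : Matrix (Fin d) (Fin d) ℝ) (hpos : ∀ i j, 0 ≤ A i j)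
    (hsum : ∀ σ : Equiv.Perm (Fin d), ∑ i, A i (σ i) = N) :
    ∃ lam mu : Fin d → ℝ, (∀ j, 0 ≤ lam j) ∧ (∀ i, 0 ≤ mu i) ∧
      (∑ j, lam j) + (∑ i, mu i) = N ∧ ∀ i j, A i j = mu i + lam j := by
  haveI : NeZero d := ⟨by omega⟩
  -- exchange lemma
  have exch : ∀ (a b : Fin d) (σ : Equiv.Perm (Fin d)),
      A a (σ a) + A b (σ b) = A a (σ b) + A b (σ a) := by
    intro a b σ
    rcases eq_or_ne a b with rfl | hab
    · ring
    · have h1 := hsum σ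
      have h2 := hsum ((Equiv.swap a b).trans σ)
      have h3 : ∑ k, A ((Equiv.swap a b) k) (σ k) = N := by
        rw [← h2, ← Equiv.sum_comp (Equiv.swap a b)
          (fun k => A k (((Equiv.swap a b).trans σ) k))]
        apply Finset.sum_congr rfl
        intro k _
        simp [Equiv.swap_apply_self]
      have key : ∑ k, (A k (σ k) - A ((Equiv.swap a b) k) (σ k)) = 0 := by
        rw [Finset.sum_sub_distrib, h1, h3]; ring
      have hsub : ∑ k ∈ ({a, b} : Finset (Fin d)),
          (A k (σ k) - A ((Equiv.swap a b) k) (σ k))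
          = ∑ k, (A k (σ k) - A ((Equiv.swap a b) k) (σ k)) := by
        apply Finset.sum_subset (Finset.subset_univ _)
        intro x _ hx
        simp only [Finset.mem_insert, Finset.mem_singleton, not_or] at hx
        rw [Equiv.swap_apply_of_ne_of_ne hx.1 hx.2]
        ring
      rw [key, Finset.sum_pair hab, Equiv.swap_apply_left, Equiv.swap_apply_right] at hsub
      linarith
  -- the rectangle relation
  have R : ∀ i j : Fin d, A i j + A 0 0 = A i 0 + A 0 j := by
    intro i j
    rcases eq_or_ne i 0 with rfl | hi
    · ring
    rcases eq_or_ne j 0 with rfl | hj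
    · ring
    have := exch 0 i (Equiv.swap i j)
    rw [Equiv.swap_apply_of_ne_of_ne (Ne.symm hi) (Ne.symm hj), Equiv.swap_apply_left] at this
    linarith
  set t : ℝ := Finset.univ.sup' (Finset.univ_nonempty) (fun i : Fin d => A 0 0 - A i 0) with ht
  have hle : ∀ i : Fin d, A 0 0 - A i 0 ≤ t := by
    intro i; rw [ht]; exact Finset.le_sup' (fun i : Fin d => A 0 0 - A i 0) (Finset.mem_univ i)
  have hub : ∀ j : Fin d, t ≤ A 0 j := by
    intro j
    rw [ht]
    apply Finset.sup'_le
    intro i _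
    have := R i j
    have := hpos i j
    linarith
  refine ⟨fun j => A 0 j - t, fun i => A i 0 - A 0 0 + t, ?_, ?_, ?_, ?_⟩
  · intro j; have := hub j; dsimp only; linarith
  · intro i; have := hle i; dsimp only; linarith
  · have heq : ∀ i : Fin d, (A 0 i - t) + (A i 0 - A 0 0 + t) = A i i := by
      intro i; have := R i i; linarith
    rw [← Finset.sum_add_distrib]
    rw [Finset.sum_congr rfl (fun i _ => heq i)]
    simpa using hsum (Equiv.refl _)
  · intro i j
    have h1 := R i j
    have h2 : (fun i => A i 0 - A 0 0 + t) i + (fun j => A 0 j - t) j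
        = A i 0 - A 0 0 + A 0 j := by dsimp only; ring
    rw [h2]; linarith
end

section
/- Let A be a d-by-d nonnegative real matrix such that all diagonal sums ∑_i A_{i,σ(i)} over permutations σ are equal, and suppose every column and every row of A contains a zero entry. Then A is the zero matrix. -/
theorem stmt_2 (d : ℕ) (hd : 2 ≤ d)
    (A : Matrix (Fin d) (Fin d) ℝ) (hpos : ∀ i j, 0 ≤ A i j)
    (hsum : ∀ σ τ : Equiv.Perm (Fin d), ∑ i, A i (σ i) = ∑ i, A i (τ i))
    (hcol : ∀ j, ∃ i, A i j = 0) (hrow : ∀ i, ∃ j, A i j = 0) :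
    A = 0 := by
  have rect : ∀ a b k l : Fin d, a ≠ b → k ≠ l →
      A a k + A b l = A a l + A b k := by
    intro a b k l hab hkl
    set c := Equiv.swap a k b with hc
    have hck : c ≠ k := by
      simp only [hc]
      intro h
      have : b = a := by
        have := congrArg (Equiv.swap a k) h
        simpa [Equiv.swap_apply_left] using this
      exact hab this.symm
    set σ : Equiv.Perm (Fin d) := (Equiv.swap c l) * (Equiv.swap a k) with hσ
    set σ' : Equiv.Perm (Fin d) := (Equiv.swap k l) * σ with hσ'
    have hσa : σ a = k := by
      simp only [hσ, Equiv.Perm.mul_apply, Equiv.swap_apply_left]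
      exact Equiv.swap_apply_of_ne_of_ne hck.symm hkl
    have hσb : σ b = l := by
      simp only [hσ, Equiv.Perm.mul_apply, ← hc, Equiv.swap_apply_left]
    have hσ'a : σ' a = l := by
      simp [hσ', Equiv.Perm.mul_apply, hσa]
    have hσ'b : σ' b = k := by
      simp [hσ', Equiv.Perm.mul_apply, hσb]
    have key : ∀ (π : Equiv.Perm (Fin d)), ∑ i, A i (π i)
        = A a (π a) + A b (π b) + ∑ i ∈ Finset.univ \ {a, b}, A i (π i) := by
      intro π
      rw [← Finset.sum_sdiff (Finset.subset_univ ({a, b} : Finset (Fin d))),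
        Finset.sum_pair hab]
      ring
    have h := hsum σ σ'
    rw [key σ, key σ', hσa, hσb, hσ'a, hσ'b] at h
    have htail : ∑ i ∈ Finset.univ \ {a, b}, A i (σ' i)
        = ∑ i ∈ Finset.univ \ {a, b}, A i (σ i) := by
      apply Finset.sum_congr rfl
      intro i hi
      simp only [Finset.mem_sdiff, Finset.mem_insert, Finset.mem_singleton] at hi
      push_neg at hi
      obtain ⟨-, hia, hib⟩ := hi
      have h1 : σ i ≠ k := by rw [← hσa]; exact fun h => hia (σ.injective h)
      have h2 : σ i ≠ l := by rw [← hσb]; exact fun h => hib (σ.injective h)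
      simp [hσ', Equiv.Perm.mul_apply, Equiv.swap_apply_of_ne_of_ne h1 h2]
    rw [htail] at h
    linarith
  ext i j
  obtain ⟨i0, hi0⟩ := hcol j
  obtain ⟨j0, hj0⟩ := hrow i
  by_cases h1 : i = i0
  · subst h1; simpa using hi0
  by_cases h2 : j = j0
  · subst h2; simpa using hj0
  have h := rect i i0 j j0 h1 h2
  rw [hi0, hj0] at h
  have := hpos i j
  have := hpos i0 j0
  simp only [Matrix.zero_apply]
  linarith
end

section
/- The Gardner polytope G_d, consisting of nonnegative d×d real matrices all of whose permutation-diagonal sums equal 1, is exactly the convex hull of the 2d matrices R_1,...,R_d, C_1,...,C_d. -/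
open Finset

theorem stmt_6 (d : ℕ) (hd : 2 ≤ d)
    (R C : Fin d → Matrix (Fin d) (Fin d) ℝ)
    (hR : ∀ i k l, R i k l = if k = i then 1 else 0)
    (hC : ∀ j k l, C j k l = if l = j then 1 else 0) :
    {A : Matrix (Fin d) (Fin d) ℝ | (∀ i j, 0 ≤ A i j) ∧
        ∀ σ : Equiv.Perm (Fin d), ∑ i, A i (σ i) = 1}
      = convexHull ℝ (Set.range R ∪ Set.range C) := by
  haveI : NeZero d := ⟨by omega⟩
  apply Set.Subset.antisymm
  · -- hard direction
    intro A hA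
    obtain ⟨hpos, hsum⟩ := hA
    -- rectangle identity
    have key : ∀ i j : Fin d, A i j = A i 0 + A 0 j - A 0 0 := by
      intro i j
      by_cases hi : i = 0
      · subst hi; ring
      by_cases hj : j = 0
      · subst hj; ring
      · set σ : Equiv.Perm (Fin d) := Equiv.swap i j with hσ
        set τ : Equiv.Perm (Fin d) := σ * Equiv.swap 0 i with hτ
        have h1 := hsum σ
        have h2 := hsum τ
        have hσ0 : σ 0 = 0 := Equiv.swap_apply_of_ne_of_ne (Ne.symm hi) (Ne.symm hj)
        have hσi : σ i = j := Equiv.swap_apply_left i j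
        have hτ0 : τ 0 = j := by
          simp [hτ, Equiv.Perm.mul_apply, Equiv.swap_apply_left, hσi]
        have hτi : τ i = 0 := by
          simp [hτ, Equiv.Perm.mul_apply, Equiv.swap_apply_right, hσ0]
        have hzero : ∀ k : Fin d, k ∉ ({0, i} : Finset (Fin d)) →
            A k (σ k) - A k (τ k) = 0 := by
          intro k hk
          simp only [Finset.mem_insert, Finset.mem_singleton, not_or] at hk
          have : τ k = σ k := by
            simp [hτ, Equiv.Perm.mul_apply,
              Equiv.swap_apply_of_ne_of_ne hk.1 hk.2]
          rw [this]; ring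
        have hsplit : ∑ k, (A k (σ k) - A k (τ k))
            = ∑ k ∈ ({0, i} : Finset (Fin d)), (A k (σ k) - A k (τ k)) := by
          refine (Finset.sum_subset (Finset.subset_univ _) ?_).symm
          intro k _ hk
          exact hzero k hk
        have hdiff : ∑ k, (A k (σ k) - A k (τ k)) = 0 := by
          rw [Finset.sum_sub_distrib, h1, h2]; ring
        rw [hsplit, Finset.sum_pair (Ne.symm hi)] at hdiff
        rw [hσ0, hσi, hτ0, hτi] at hdiff
        linarith
    obtain ⟨j0, -, hj0⟩ := Finset.exists_min_image (univ : Finset (Fin d))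
      (fun j => A 0 j) ⟨0, mem_univ 0⟩
    set c : Fin d → ℝ := fun i => A i j0 with hc
    set e : Fin d → ℝ := fun j => A 0 j - A 0 j0 with he
    have hce : ∀ i j, c i + e j = A i j := by
      intro i j
      have k1 := key i j
      have k2 := key i j0
      simp only [hc, he]
      linarith
    have hc0 : ∀ i, 0 ≤ c i := fun i => hpos i j0
    have he0 : ∀ j, 0 ≤ e j := fun j => by
      have := hj0 j (mem_univ j); simp only [he]; linarith
    have htot : ∑ i, c i + ∑ j, e j = 1 := by
      rw [← Finset.sum_add_distrib]
      have := hsum (Equiv.refl (Fin d))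
      simp only [Equiv.refl_apply] at this
      rw [← this]
      exact Finset.sum_congr rfl fun i _ => hce i i
    -- convex combination
    set w : Fin d ⊕ Fin d → ℝ := Sum.elim c e with hw
    set z : Fin d ⊕ Fin d → Matrix (Fin d) (Fin d) ℝ := Sum.elim R C with hz
    have hwsum : ∑ p : Fin d ⊕ Fin d, w p = 1 := by
      rw [Fintype.sum_sum_type]; simpa [hw] using htot
    have hmem := Finset.centerMass_mem_convexHull (univ : Finset (Fin d ⊕ Fin d))
      (w := w) (z := z) (s := Set.range R ∪ Set.range C)
      (fun p _ => by cases p <;> simp [hw, hc0, he0])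
      (by rw [hwsum]; norm_num)
      (fun p _ => by
        cases p with
        | inl i => exact Set.mem_union_left _ ⟨i, rfl⟩
        | inr j => exact Set.mem_union_right _ ⟨j, rfl⟩)
    have hcm : (univ : Finset (Fin d ⊕ Fin d)).centerMass w z = A := by
      rw [Finset.centerMass, hwsum, inv_one, one_smul]
      ext k l
      simp only [Matrix.sum_apply, Matrix.smul_apply, smul_eq_mul]
      rw [Fintype.sum_sum_type]
      simp only [hw, hz, Sum.elim_inl, Sum.elim_inr, hR, hC]
      simp only [mul_ite, mul_one, mul_zero, Finset.sum_ite_eq, Finset.mem_univ,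
        if_true]
      exact hce k l
    rwa [hcm] at hmem
  · -- easy direction
    apply convexHull_min
    · rintro M (⟨i, rfl⟩ | ⟨j, rfl⟩)
      · constructor
        · intro k l; rw [hR]; positivity
        · intro σ
          have : ∀ k, R i k (σ k) = if k = i then 1 else 0 := fun k => hR i k (σ k)
          simp [this]
      · constructor
        · intro k l; rw [hC]; positivity
        · intro σ
          have : ∀ k, C j k (σ k) = if k = σ.symm j then 1 else 0 := by
            intro k
            simp [hC, Equiv.apply_eq_iff_eq_symm_apply]
          simp [this]
    · intro A hA B hB a b ha hb hab
      constructor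
      · intro i j
        have := hA.1 i j
        have := hB.1 i j
        simp only [Matrix.add_apply, Matrix.smul_apply, smul_eq_mul]
        positivity
      · intro σ
        simp only [Matrix.add_apply, Matrix.smul_apply, smul_eq_mul,
          Finset.sum_add_distrib, ← Finset.mul_sum, hA.2 σ, hB.2 σ]
        linarith
end

section
/- The number of d×d matrices with nonnegative integer entries all of whose permutation-diagonal sums equal N is g_d(N) = C(N+2d−1, 2d−1) − C(N+d−1, 2d−1). -/
open Finset

-- stars and bars count
lemma cnt_tuple (α : Type*) [Fintype α] [DecidableEq α] (n : ℕ) :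
    Nat.card {P : α → ℕ // ∑ i, P i = n} = (Fintype.card α + n - 1).choose n := by
  rw [Nat.card_congr (Sym.equivNatSumOfFintype α n).symm, Nat.card_eq_fintype_card,
    Sym.card_sym_eq_choose]

instance fin_tuple (α : Type*) [Fintype α] [DecidableEq α] (n : ℕ) : Finite {P : α → ℕ // ∑ i, P i = n} :=
  Finite.of_equiv _ (Sym.equivNatSumOfFintype α n)

lemma exchange {d N : ℕ} {A : Matrix (Fin d) (Fin d) ℕ}
    (hA : ∀ σ : Equiv.Perm (Fin d), ∑ i, A i (σ i) = N)
    (i k j l : Fin d) : A i j + A k l = A i l + A k j := by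
  rcases eq_or_ne i k with rfl | hik
  · exact add_comm _ _
  rcases eq_or_ne j l with rfl | hjl
  · rfl
  set f := Equiv.swap i j with hf
  have hfk : f k ≠ j := by
    intro h
    have hk : k = i := by simpa [Equiv.swap_apply_right] using Equiv.swap_apply_eq_iff.mp h
    exact hik hk.symm
  set σ := f.trans (Equiv.swap (f k) l) with hσ
  have hσi : σ i = j := by
    have : f i = j := Equiv.swap_apply_left i j
    simp only [hσ, Equiv.trans_apply, this]
    exact Equiv.swap_apply_of_ne_of_ne (Ne.symm hfk) hjl
  have hσk : σ k = l := by
    simp only [hσ, Equiv.trans_apply]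
    exact Equiv.swap_apply_left _ _
  set σ' := (Equiv.swap i k).trans σ with hσ'
  have h1 := hA σ
  have h2 := hA σ'
  have hσ'i : σ' i = l := by
    simp only [hσ', Equiv.trans_apply, Equiv.swap_apply_left, hσk]
  have hσ'k : σ' k = j := by
    simp only [hσ', Equiv.trans_apply, Equiv.swap_apply_right, hσi]
  have hki : k ∈ (univ : Finset (Fin d)).erase i := by simp [hik.symm]
  have e1 : ∑ m, A m (σ m) = A i j + (A k l + ∑ m ∈ (univ.erase i).erase k, A m (σ m)) := by
    rw [← Finset.add_sum_erase _ _ (mem_univ i), hσi, ← Finset.add_sum_erase _ _ hki, hσk]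
  have e2 : ∑ m, A m (σ' m) = A i l + (A k j + ∑ m ∈ (univ.erase i).erase k, A m (σ m)) := by
    rw [← Finset.add_sum_erase _ _ (mem_univ i), hσ'i, ← Finset.add_sum_erase _ _ hki, hσ'k]
    congr 2
    refine Finset.sum_congr rfl fun m hm => ?_
    simp only [mem_erase] at hm
    congr 1
    simp only [hσ', Equiv.trans_apply]
    rw [Equiv.swap_apply_of_ne_of_ne hm.2.1 hm.1]
  omega

theorem stmt_9 (d N : ℕ) (hd : 1 ≤ d) :
    Nat.card {A : Matrix (Fin d) (Fin d) ℕ |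
        ∀ σ : Equiv.Perm (Fin d), ∑ i, A i (σ i) = N}
      = Nat.choose (N + 2 * d - 1) (2 * d - 1) - Nat.choose (N + d - 1) (2 * d - 1) := by
  classical
  set z : Fin d := ⟨0, hd⟩ with hz
  -- pairs types
  set Sall : Type := {p : (Fin d → ℕ) × (Fin d → ℕ) // ∑ i, p.1 i + ∑ j, p.2 j = N} with hSall
  set q : Sall → Prop := fun x => ∃ j, x.val.2 j = 0 with hq
  -- the matrix set
  set M := {A : Matrix (Fin d) (Fin d) ℕ | ∀ σ : Equiv.Perm (Fin d), ∑ i, A i (σ i) = N} with hM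
  -- forward map
  set Φ : {x : Sall // q x} → M := fun x =>
    ⟨fun i j => x.val.val.1 i + x.val.val.2 j, by
      intro σ
      have h := x.val.property
      calc ∑ i, (x.val.val.1 i + x.val.val.2 (σ i))
          = ∑ i, x.val.val.1 i + ∑ i, x.val.val.2 (σ i) := Finset.sum_add_distrib
        _ = ∑ i, x.val.val.1 i + ∑ i, x.val.val.2 i := by rw [Equiv.sum_comp σ]
        _ = N := h⟩ with hΦ
  have hΦbij : Function.Bijective Φ := by
    constructor
    · rintro ⟨⟨⟨r, c⟩, hsum⟩, j0, hj0⟩ ⟨⟨⟨r', c'⟩, hsum'⟩, j0', hj0'⟩ hEq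
      have hA : ∀ i j, r i + c j = r' i + c' j := by
        intro i j
        have := congrArg (fun A : M => (A : Matrix (Fin d) (Fin d) ℕ) i j) hEq
        simpa [hΦ] using this
      replace hj0 : c j0 = 0 := hj0
      replace hj0' : c' j0' = 0 := hj0'
      have hr : r = r' := by
        funext i
        have h1 := hA i j0
        have h2 := hA i j0'
        omega
      have hc : c = c' := by
        funext j
        have := hA z j
        rw [hr] at this
        omega
      simp [hr, hc]
    · rintro ⟨A, hA⟩
      have hA' : ∀ σ : Equiv.Perm (Fin d), ∑ i, A i (σ i) = N := hA
      obtain ⟨j0, -, hmin⟩ := Finset.exists_min_image (univ : Finset (Fin d)) (fun j => A z j)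
        ⟨z, mem_univ z⟩
      have hmin' : ∀ j, A z j0 ≤ A z j := fun j => hmin j (mem_univ j)
      set r : Fin d → ℕ := fun i => A i j0 with hr
      set c : Fin d → ℕ := fun j => A z j - A z j0 with hc
      have hrc : ∀ i j, r i + c j = A i j := by
        intro i j
        have hx := exchange hA' i z j0 j
        have := hmin' j
        simp only [hr, hc]
        omega
      have hsum : ∑ i, r i + ∑ j, c j = N := by
        have : ∑ i, (r i + c i) = N := by
          rw [Finset.sum_congr rfl fun i _ => hrc i i]
          simpa using hA' (Equiv.refl _)
        rw [← Finset.sum_add_distrib]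
        exact this
      refine ⟨⟨⟨⟨r, c⟩, hsum⟩, ⟨j0, by simp [hc]⟩⟩, ?_⟩
      apply Subtype.ext
      funext i j
      exact hrc i j
  -- split Sall
  have hsplit : Nat.card Sall = Nat.card {x : Sall // q x} + Nat.card {x : Sall // ¬ q x} := by
    have hfin : Finite Sall := by
      refine Finite.of_injective (fun x : Sall =>
        (⟨Sum.elim x.val.1 x.val.2, by simp [Fintype.sum_sum_type, x.property]⟩ :
          {P : Fin d ⊕ Fin d → ℕ // ∑ i, P i = N})) ?_
      rintro ⟨⟨r, c⟩, h⟩ ⟨⟨r', c'⟩, h'⟩ hEq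
      have := congrArg Subtype.val hEq
      refine Subtype.ext (Prod.ext (funext fun i => ?_) (funext fun j => ?_))
      · exact congrFun this (Sum.inl i)
      · exact congrFun this (Sum.inr j)
    rw [← Nat.card_congr (Equiv.sumCompl q), Nat.card_sum]
  -- card Sall
  have hcardAll : Nat.card Sall = (N + 2 * d - 1).choose (2 * d - 1) := by
    have e : Sall ≃ {P : Fin d ⊕ Fin d → ℕ // ∑ i, P i = N} := by
      refine ⟨fun x => ⟨Sum.elim x.val.1 x.val.2, by simp [Fintype.sum_sum_type, x.property]⟩,
        fun f => ⟨(fun i => f.val (Sum.inl i), fun j => f.val (Sum.inr j)), by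
          have := f.property; simpa [Fintype.sum_sum_type] using this⟩, ?_, ?_⟩
      · rintro ⟨⟨r, c⟩, h⟩; rfl
      · rintro ⟨f, h⟩
        apply Subtype.ext
        funext x
        cases x <;> rfl
    rw [Nat.card_congr e, cnt_tuple]
    have hcard : Fintype.card (Fin d ⊕ Fin d) = 2 * d := by simp [two_mul]
    rw [hcard]
    have h2 : 2 * d + N - 1 = N + 2 * d - 1 := by omega
    rw [h2]
    exact Nat.choose_symm_of_eq_add (by omega)
  -- card of the positive part
  have hcardPos : Nat.card {x : Sall // ¬ q x} = (N + d - 1).choose (2 * d - 1) := by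
    rcases le_or_gt d N with hdN | hdN
    · -- equiv with Sall at N - d
      have e : {x : Sall // ¬ q x} ≃
          {p : (Fin d → ℕ) × (Fin d → ℕ) // ∑ i, p.1 i + ∑ j, p.2 j = N - d} := by
        refine ⟨fun x => ⟨(x.val.val.1, fun j => x.val.val.2 j - 1), ?_⟩,
          fun p => ⟨⟨(p.val.1, fun j => p.val.2 j + 1), ?_⟩, ?_⟩, ?_, ?_⟩
        · obtain ⟨⟨⟨r, c⟩, hsum⟩, hqx⟩ := x
          simp only [hq, not_exists] at hqx
          have hge : ∀ j, 1 ≤ c j := fun j => Nat.one_le_iff_ne_zero.mpr (hqx j)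
          have h1 : ∑ j, (c j - 1) + d = ∑ j, c j := by
            have : ∑ j, (c j - 1) + ∑ _j : Fin d, 1 = ∑ j, (c j - 1 + 1) :=
              Finset.sum_add_distrib.symm
            simp only [Finset.sum_const, card_univ, Fintype.card_fin, smul_eq_mul, mul_one] at this
            rw [this]
            exact Finset.sum_congr rfl fun j _ => Nat.sub_add_cancel (hge j)
          replace hsum : ∑ i, r i + ∑ j, c j = N := hsum
          show ∑ i, r i + ∑ j, (c j - 1) = N - d
          omega
        · obtain ⟨⟨r, c⟩, hsum⟩ := p
          have h1 : ∑ j, (c j + 1) = ∑ j, c j + d := by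
            rw [Finset.sum_add_distrib]
            simp
          replace hsum : ∑ i, r i + ∑ j, c j = N - d := hsum
          show ∑ i, r i + ∑ j, (c j + 1) = N
          omega
        · simp only [hq, not_exists]
          intro j
          simp
        · rintro ⟨⟨⟨r, c⟩, hsum⟩, hq'⟩
          simp only [hq, not_exists] at hq'
          apply Subtype.ext
          apply Subtype.ext
          refine Prod.ext rfl (funext fun j => ?_)
          exact Nat.sub_add_cancel (Nat.one_le_iff_ne_zero.mpr (hq' j))
        · rintro ⟨⟨r, c⟩, hsum⟩
          apply Subtype.ext
          exact Prod.ext rfl (funext fun j => by simp)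
      rw [Nat.card_congr e]
      have e2 : {p : (Fin d → ℕ) × (Fin d → ℕ) // ∑ i, p.1 i + ∑ j, p.2 j = N - d} ≃
          {P : Fin d ⊕ Fin d → ℕ // ∑ i, P i = N - d} := by
        refine ⟨fun x => ⟨Sum.elim x.val.1 x.val.2, by simp [Fintype.sum_sum_type, x.property]⟩,
          fun f => ⟨(fun i => f.val (Sum.inl i), fun j => f.val (Sum.inr j)), by
            have := f.property; simpa [Fintype.sum_sum_type] using this⟩, ?_, ?_⟩
        · rintro ⟨⟨r, c⟩, h⟩; rfl
        · rintro ⟨f, h⟩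
          apply Subtype.ext
          funext x
          cases x <;> rfl
      rw [Nat.card_congr e2, cnt_tuple]
      have hcard : Fintype.card (Fin d ⊕ Fin d) = 2 * d := by simp [two_mul]
      rw [hcard]
      have h1 : 2 * d + (N - d) - 1 = N + d - 1 := by omega
      rw [h1]
      exact Nat.choose_symm_of_eq_add (by omega)
    · -- empty
      have : IsEmpty {x : Sall // ¬ q x} := by
        constructor
        rintro ⟨⟨⟨r, c⟩, hsum⟩, hq'⟩
        simp only [hq, not_exists] at hq'
        have hge : ∀ j, 1 ≤ c j := fun j => Nat.one_le_iff_ne_zero.mpr (hq' j)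
        have : d ≤ ∑ j, c j := by
          calc d = ∑ _j : Fin d, 1 := by simp
            _ ≤ ∑ j, c j := Finset.sum_le_sum fun j _ => hge j
        replace hsum : ∑ i, r i + ∑ j, c j = N := hsum
        omega
      rw [Nat.card_of_isEmpty]
      have : N + d - 1 < 2 * d - 1 := by omega
      exact (Nat.choose_eq_zero_of_lt this).symm
  have : Nat.card M = Nat.card {x : Sall // q x} := (Nat.card_congr (Equiv.ofBijective Φ hΦbij)).symm
  rw [this]
  omega
end

section
/- The number of d×d matrices with nonnegative integer entries all of whose permutation-diagonal sums equal N equals ∑_{j=0}^{d−1} C(N + 2d − 2 − j, 2d−2). -/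
open Finset

section Aux

lemma sb {ι : Type*} [Fintype ι] [DecidableEq ι] (n : ℕ) :
    Nat.card {f : ι → ℕ // ∑ i, f i = n} = (Fintype.card ι + n - 1).choose n := by
  let e1 : (ι → ℕ) ≃ Multiset ι :=
    Finsupp.equivFunOnFinite.symm.trans Multiset.toFinsupp.symm.toEquiv
  have key : ∀ f : ι → ℕ, Multiset.card (e1 f) = ∑ i, f i := by
    intro f
    have h1 : e1 f = Finsupp.toMultiset (Finsupp.equivFunOnFinite.symm f) := rfl
    rw [h1, Finsupp.card_toMultiset, Finsupp.sum_fintype]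
    · simp
    · simp
  have e : {f : ι → ℕ // ∑ i, f i = n} ≃ Sym ι n :=
    Equiv.subtypeEquiv e1 (fun f => by rw [key f])
  rw [Nat.card_congr e, Nat.card_eq_fintype_card, Sym.card_sym_eq_choose]

lemma sbFinite {ι : Type*} [Fintype ι] (n : ℕ) : Finite {f : ι → ℕ // ∑ i, f i = n} := by
  have hb : ∀ (f : {f : ι → ℕ // ∑ i, f i = n}) (i : ι), f.1 i < n + 1 := by
    intro f i
    have h1 : f.1 i ≤ ∑ j, f.1 j := Finset.single_le_sum (fun j _ => Nat.zero_le _) (mem_univ i)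
    have h2 := f.2
    omega
  exact Finite.of_injective
    (fun f => (fun i => (⟨f.1 i, hb f i⟩ : Fin (n + 1)) : ι → Fin (n + 1)))
    (fun f g h => Subtype.ext (funext fun i => congrArg Fin.val (congrFun h i)))

lemma hock (k N : ℕ) : ∀ d, d ≤ N + 1 →
    (∑ j ∈ range d, (N + k - j).choose k) + (N + k + 1 - d).choose (k + 1)
      = (N + k + 1).choose (k + 1) := by
  intro d
  induction d with
  | zero => simp
  | succ d ih =>
    intro hd
    have hd' : d ≤ N + 1 := by omega
    have h1 : N + k + 1 - d = (N + k - d) + 1 := by omega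
    have h2 : (N + k - d + 1).choose (k + 1) = (N + k - d).choose k + (N + k - d).choose (k + 1) :=
      Nat.choose_succ_succ _ _
    have h3 := ih hd'
    rw [sum_range_succ, show N + k + 1 - (d + 1) = N + k - d from by omega]
    rw [h1] at h3
    omega

def pairsEquiv (d n : ℕ) :
    {p : (Fin d → ℕ) × (Fin d → ℕ) // ∑ i, p.1 i + ∑ j, p.2 j = n}
      ≃ {f : (Fin d ⊕ Fin d) → ℕ // ∑ i, f i = n} :=
  (Equiv.subtypeEquiv (Equiv.sumArrowEquivProdArrow (Fin d) (Fin d) ℕ)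
    (fun f => by simp [Fintype.sum_sum_type])).symm

lemma cardPairs (d n : ℕ) :
    Nat.card {p : (Fin d → ℕ) × (Fin d → ℕ) // ∑ i, p.1 i + ∑ j, p.2 j = n}
      = (2 * d + n - 1).choose n := by
  rw [Nat.card_congr (pairsEquiv d n), sb, Fintype.card_sum, Fintype.card_fin,
    show d + d + n - 1 = 2 * d + n - 1 from by omega]

lemma pairsFinite (d n : ℕ) :
    Finite {p : (Fin d → ℕ) × (Fin d → ℕ) // ∑ i, p.1 i + ∑ j, p.2 j = n} := by
  have := sbFinite (ι := Fin d ⊕ Fin d) n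
  exact Finite.of_equiv _ (pairsEquiv d n).symm

lemma swap_sum {d N : ℕ} (A : Matrix (Fin d) (Fin d) ℕ)
    (hA : ∀ σ : Equiv.Perm (Fin d), ∑ i, A i (σ i) = N) {a b : Fin d} (hab : a ≠ b)
    (σ : Equiv.Perm (Fin d)) :
    A a (σ a) + A b (σ b) = A a (σ b) + A b (σ a) := by
  have hbmem : b ∈ Finset.univ.erase a := mem_erase.2 ⟨hab.symm, mem_univ b⟩
  have split : ∀ f : Fin d → ℕ,
      ∑ k, f k = f a + (f b + ∑ k ∈ (Finset.univ.erase a).erase b, f k) := by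
    intro f
    rw [← Finset.add_sum_erase _ f (mem_univ a), ← Finset.add_sum_erase _ f hbmem]
  have h1 := hA σ
  have h2 := hA (σ * Equiv.swap a b)
  have h2' : ∑ k, A k (σ (Equiv.swap a b k)) = N := by
    simpa [Equiv.Perm.mul_apply] using h2
  rw [split] at h1
  rw [split] at h2'
  have tail : ∑ k ∈ (Finset.univ.erase a).erase b, A k (σ (Equiv.swap a b k))
      = ∑ k ∈ (Finset.univ.erase a).erase b, A k (σ k) := by
    refine sum_congr rfl fun k hk => ?_
    have hkb : k ≠ b := (mem_erase.1 hk).1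
    have hka : k ≠ a := (mem_erase.1 (mem_of_mem_erase hk)).1
    rw [Equiv.swap_apply_of_ne_of_ne hka hkb]
  rw [Equiv.swap_apply_left, Equiv.swap_apply_right, tail] at h2'
  omega

end Aux

theorem stmt_10 (d N : ℕ) (hd : 1 ≤ d) :
    Nat.card {A : Matrix (Fin d) (Fin d) ℕ |
        ∀ σ : Equiv.Perm (Fin d), ∑ i, A i (σ i) = N}
      = ∑ j ∈ Finset.range d, Nat.choose (N + 2 * d - 2 - j) (2 * d - 2) := by
  classical
  have hd0 : 0 < d := hd
  let i0 : Fin d := ⟨0, hd0⟩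
  rw [Set.coe_setOf]
  let P : (Fin d → ℕ) × (Fin d → ℕ) → Prop := fun p => ∑ i, p.1 i + ∑ j, p.2 j = N
  let Q : (Fin d → ℕ) × (Fin d → ℕ) → Prop := fun p => ∃ j, p.2 j = 0
  let φ : {p : (Fin d → ℕ) × (Fin d → ℕ) // P p ∧ Q p} →
      {A : Matrix (Fin d) (Fin d) ℕ // ∀ σ : Equiv.Perm (Fin d), ∑ i, A i (σ i) = N} :=
    fun p => ⟨fun i j => p.1.1 i + p.1.2 j, by
      intro σ
      rw [Finset.sum_add_distrib, Equiv.sum_comp σ p.1.2]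
      exact p.2.1⟩
  have hbij : Function.Bijective φ := by
    constructor
    · intro x y h
      have hij : ∀ i j, x.1.1 i + x.1.2 j = y.1.1 i + y.1.2 j := fun i j =>
        congrFun (congrFun (congrArg Subtype.val h) i) j
      obtain ⟨j0, hj0⟩ := x.2.2
      obtain ⟨j0', hj0'⟩ := y.2.2
      have hr : ∀ i, x.1.1 i = y.1.1 i := by
        intro i
        have h1 := hij i j0
        have h2 := hij i j0'
        omega
      refine Subtype.ext (Prod.ext (funext hr) (funext fun j => ?_))
      have h1 := hij i0 j
      have h2 := hr i0
      omega
    · rintro ⟨A, hA⟩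
      obtain ⟨j0, -, hmin⟩ :=
        Finset.exists_min_image Finset.univ (fun j => A i0 j) ⟨i0, mem_univ i0⟩
      have exch : ∀ i j, i ≠ i0 → j ≠ j0 → A i j + A i0 j0 = A i j0 + A i0 j := by
        intro i j hi hj
        set σ0 : Equiv.Perm (Fin d) := Equiv.swap i0 j0 with hσ0def
        set σ : Equiv.Perm (Fin d) := Equiv.swap j (σ0 i) * σ0 with hσdef
        have hσi : σ i = j := by
          simp [hσdef, Equiv.Perm.mul_apply, Equiv.swap_apply_right]
        have hx : σ0 i ≠ j0 := by
          intro hcon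
          exact hi (σ0.injective (by rw [hcon, hσ0def, Equiv.swap_apply_left]))
        have hσ0 : σ i0 = j0 := by
          have h1 : σ0 i0 = j0 := Equiv.swap_apply_left _ _
          rw [hσdef, Equiv.Perm.mul_apply, h1,
            Equiv.swap_apply_of_ne_of_ne (Ne.symm hj) (Ne.symm hx)]
        have h5 := swap_sum A hA hi σ
        rw [hσi, hσ0] at h5
        exact h5
      have hpt : ∀ i j, A i j0 + (A i0 j - A i0 j0) = A i j := by
        intro i j
        have h6 := hmin j (mem_univ j)
        by_cases hi : i = i0
        · subst hi; omega
        · by_cases hj : j = j0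
          · subst hj; omega
          · have h5 := exch i j hi hj
            omega
      refine ⟨⟨(fun i => A i j0, fun j => A i0 j - A i0 j0), ?_, ⟨j0, Nat.sub_self _⟩⟩, ?_⟩
      · show ∑ i, A i j0 + ∑ j, (A i0 j - A i0 j0) = N
        rw [← Finset.sum_add_distrib, Finset.sum_congr rfl (fun i _ => hpt i i)]
        simpa using hA 1
      · exact Subtype.ext (funext fun i => funext fun j => hpt i j)
  rw [← Nat.card_congr (Equiv.ofBijective φ hbij)]
  haveI hTfin : Finite {p : (Fin d → ℕ) × (Fin d → ℕ) // P p} := pairsFinite d N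
  haveI hSfin : Finite {p : (Fin d → ℕ) × (Fin d → ℕ) // P p ∧ Q p} :=
    Finite.of_injective (fun p => (⟨p.1, p.2.1⟩ : {p // P p}))
      (by intro p q h; have h2 := congrArg Subtype.val h; exact Subtype.ext h2)
  haveI hUfin : Finite {p : (Fin d → ℕ) × (Fin d → ℕ) // P p ∧ ¬ Q p} :=
    Finite.of_injective (fun p => (⟨p.1, p.2.1⟩ : {p // P p}))
      (by intro p q h; have h2 := congrArg Subtype.val h; exact Subtype.ext h2)
  have esplit : {p : (Fin d → ℕ) × (Fin d → ℕ) // P p ∧ Q p} ⊕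
      {p : (Fin d → ℕ) × (Fin d → ℕ) // P p ∧ ¬ Q p} ≃ {p // P p} :=
    (Equiv.sumCongr (Equiv.subtypeSubtypeEquivSubtypeInter P Q).symm
      (Equiv.subtypeSubtypeEquivSubtypeInter P (fun p => ¬ Q p)).symm).trans
      (Equiv.sumCompl (fun x : {p // P p} => Q x.1))
  have hsum : Nat.card {p : (Fin d → ℕ) × (Fin d → ℕ) // P p ∧ Q p}
      + Nat.card {p : (Fin d → ℕ) × (Fin d → ℕ) // P p ∧ ¬ Q p}
      = (2 * d + N - 1).choose N := by
    rw [← Nat.card_sum, Nat.card_congr esplit, cardPairs]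
  have cardU : Nat.card {p : (Fin d → ℕ) × (Fin d → ℕ) // P p ∧ ¬ Q p}
      = if d ≤ N then (2 * d + (N - d) - 1).choose (N - d) else 0 := by
    by_cases hdN : d ≤ N
    · rw [if_pos hdN]
      have eU : {p : (Fin d → ℕ) × (Fin d → ℕ) // P p ∧ ¬ Q p}
          ≃ {p : (Fin d → ℕ) × (Fin d → ℕ) // ∑ i, p.1 i + ∑ j, p.2 j = N - d} := by
        refine ⟨fun p => ⟨(p.1.1, fun j => p.1.2 j - 1), ?_⟩,
          fun q => ⟨(q.1.1, fun j => q.1.2 j + 1), ?_, ?_⟩, ?_, ?_⟩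
        · obtain ⟨p, hP, hQ⟩ := p
          simp only [Q, not_exists] at hQ
          have hsub : ∑ j, (p.2 j - 1) + d = ∑ j, p.2 j := by
            have h1 : ∑ j, (p.2 j - 1) + ∑ _j : Fin d, 1 = ∑ j, p.2 j := by
              rw [← Finset.sum_add_distrib]
              exact sum_congr rfl fun j _ => by have := hQ j; omega
            simpa using h1
          have hP' : ∑ i, p.1 i + ∑ j, p.2 j = N := hP
          show ∑ i, p.1 i + ∑ j, (p.2 j - 1) = N - d
          omega
        · obtain ⟨q, hq⟩ := q
          have hsub : ∑ j, (q.2 j + 1) = ∑ j, q.2 j + d := by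
            rw [Finset.sum_add_distrib]; simp
          show ∑ i, q.1 i + ∑ j, (q.2 j + 1) = N
          omega
        · obtain ⟨q, hq⟩ := q
          rintro ⟨j, hj⟩
          simp at hj
        · rintro ⟨p, hP, hQ⟩
          simp only [Q, not_exists] at hQ
          refine Subtype.ext (Prod.ext rfl (funext fun j => ?_))
          have := hQ j
          show p.2 j - 1 + 1 = p.2 j
          omega
        · rintro ⟨q, hq⟩
          refine Subtype.ext (Prod.ext rfl (funext fun j => ?_))
          show q.2 j + 1 - 1 = q.2 j
          omega
      rw [Nat.card_congr eU, cardPairs]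
    · rw [if_neg hdN]
      have : IsEmpty {p : (Fin d → ℕ) × (Fin d → ℕ) // P p ∧ ¬ Q p} := by
        refine ⟨?_⟩
        rintro ⟨p, hP, hQ⟩
        simp only [Q, not_exists] at hQ
        have h1 : ∑ _j : Fin d, 1 ≤ ∑ j, p.2 j :=
          Finset.sum_le_sum fun j _ => by have := hQ j; omega
        simp only [Finset.sum_const, card_univ, Fintype.card_fin, smul_eq_mul, mul_one] at h1
        have hP' : ∑ i, p.1 i + ∑ j, p.2 j = N := hP
        omega
      exact Nat.card_of_isEmpty
  -- final arithmetic
  set k := 2 * d - 2 with hk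
  have harith : ∀ j ∈ Finset.range d, (N + 2 * d - 2 - j).choose (2 * d - 2)
      = (N + k - j).choose k := by
    intro j hj
    congr 1
    omega
  rw [Finset.sum_congr rfl harith]
  have hcT : (2 * d + N - 1).choose N = (N + k + 1).choose (k + 1) := by
    rw [show 2 * d + N - 1 = N + k + 1 from by omega]
    rw [show k + 1 = (N + k + 1) - N from by omega]
    exact (Nat.choose_symm (by omega)).symm
  by_cases hdN : d ≤ N
  · rw [if_pos hdN] at cardU
    have hcU : (2 * d + (N - d) - 1).choose (N - d) = (N + k + 1 - d).choose (k + 1) := by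
      rw [show 2 * d + (N - d) - 1 = N + k + 1 - d from by omega]
      rw [show k + 1 = (N + k + 1 - d) - (N - d) from by omega]
      exact (Nat.choose_symm (by omega)).symm
    have h8 := hock k N d (by omega)
    omega
  · rw [if_neg hdN] at cardU
    have h8 := hock k N (N + 1) (le_refl _)
    have h9 : (N + k + 1 - (N + 1)).choose (k + 1) = 0 :=
      Nat.choose_eq_zero_of_lt (by omega)
    have h10 : ∑ j ∈ range (N + 1), (N + k - j).choose k
        = ∑ j ∈ range d, (N + k - j).choose k := by
      refine Finset.sum_subset (range_subset_range.2 (by omega)) ?_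
      intro j hj hnj
      simp only [mem_range] at hj hnj
      refine Nat.choose_eq_zero_of_lt ?_
      omega
    omega
end

section
/- The number of d×d matrices with nonnegative integer entries all of whose permutation-diagonal sums equal N equals ∑_{k=1}^{d} (−1)^{k−1} C(d,k) C(N + 2d − k − 1, 2d − k − 1). -/
namespace Stmt11Aux

open Finset

lemma card_tuples (α : Type*) [Fintype α] [DecidableEq α] (n : ℕ) :
    Nat.card {P : α → ℕ // ∑ i, P i = n} = (Fintype.card α + n - 1).choose n := by
  rw [← Nat.card_congr (Sym.equivNatSumOfFintype α n), Nat.card_eq_fintype_card,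
    Sym.card_sym_eq_choose]

lemma alt_sum (d : ℕ) : ∀ N m : ℕ, d ≤ m →
    ∑ k ∈ Finset.range (d+1), (-1:ℤ)^k * (d.choose k) * ((N + (m - k)).choose (m - k))
      = ((N + m - d).choose m : ℤ) := by
  induction d with
  | zero => intro N m _; simp
  | succ d ih =>
    intro N m' hm
    obtain ⟨m, rfl⟩ : ∃ m, m' = m + 1 := ⟨m' - 1, by omega⟩
    have hdm : d ≤ m := by omega
    have e1 : ∑ k ∈ Finset.range (d+2), (-1:ℤ)^k * ((d+1).choose k) * ((N + (m+1-k)).choose (m+1-k))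
        = ((N + (m+1)).choose (m+1) : ℤ) + ∑ k ∈ Finset.range (d+1),
            (-1:ℤ)^(k+1) * ((d.choose k : ℤ) + d.choose (k+1)) * ((N + (m-k)).choose (m-k)) := by
      rw [Finset.sum_range_succ']
      rw [add_comm]
      congr 1
      · simp
      · apply Finset.sum_congr rfl
        intro k hk
        have : m + 1 - (k+1) = m - k := by omega
        rw [this, Nat.choose_succ_succ]
        push_cast; ring
    have e2 : ∑ k ∈ Finset.range (d+1),
            (-1:ℤ)^(k+1) * ((d.choose k : ℤ) + d.choose (k+1)) * ((N + (m-k)).choose (m-k))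
        = -∑ k ∈ Finset.range (d+1), (-1:ℤ)^k * (d.choose k) * ((N + (m-k)).choose (m-k))
          + ∑ k ∈ Finset.range (d+1), (-1:ℤ)^(k+1) * (d.choose (k+1)) * ((N + (m-k)).choose (m-k)) := by
      rw [← Finset.sum_neg_distrib, ← Finset.sum_add_distrib]
      apply Finset.sum_congr rfl
      intro k _; ring
    have e3 : ∑ k ∈ Finset.range (d+1), (-1:ℤ)^(k+1) * (d.choose (k+1)) * ((N + (m-k)).choose (m-k))
        = ∑ k ∈ Finset.range (d+1), (-1:ℤ)^k * (d.choose k) * ((N + (m+1-k)).choose (m+1-k))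
          - ((N + (m+1)).choose (m+1) : ℤ) := by
      have key := Finset.sum_range_succ' (fun k => (-1:ℤ)^k * (d.choose k) * ((N + (m+1-k)).choose (m+1-k))) (d+1)
      rw [Finset.sum_range_succ] at key
      simp only [Nat.choose_succ_self, Nat.cast_zero, mul_zero, zero_mul, add_zero, pow_zero,
        Nat.choose_zero_right, Nat.cast_one, one_mul, Nat.sub_zero] at key
      have hcongr : ∑ k ∈ Finset.range (d+1), (-1:ℤ)^(k+1) * (d.choose (k+1)) * ((N + (m-k)).choose (m-k))
          = ∑ k ∈ Finset.range (d+1), (-1:ℤ)^(k+1) * (d.choose (k+1)) * ((N + (m+1-(k+1))).choose (m+1-(k+1))) := by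
        apply Finset.sum_congr rfl
        intro k _
        have : m + 1 - (k+1) = m - k := by omega
        rw [this]
      rw [hcongr]
      linarith [key]
    rw [e1, e2, e3, ih N m hdm, ih N (m+1) (by omega)]
    have h4 : N + (m+1) - d = (N + m - d) + 1 := by omega
    have h5 : N + (m+1) - (d+1) = N + m - d := by omega
    rw [h4, h5, Nat.choose_succ_succ]
    push_cast; ring


section
variable (d N : ℕ)

lemma card_piA (n : ℕ) :
    (Finset.piAntidiag (Finset.univ : Finset (Fin d ⊕ Fin d)) n).card
      = (2*d + n - 1).choose n := by
  classical
  have h1 : Nat.card {P : Fin d ⊕ Fin d → ℕ // ∑ i, P i = n}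
      = (Fintype.card (Fin d ⊕ Fin d) + n - 1).choose n := by
    rw [← Nat.card_congr (Sym.equivNatSumOfFintype (Fin d ⊕ Fin d) n), Nat.card_eq_fintype_card,
      Sym.card_sym_eq_choose]
  have h2 : Nat.card {P : Fin d ⊕ Fin d → ℕ // ∑ i, P i = n}
      = Nat.card (Finset.piAntidiag (Finset.univ : Finset (Fin d ⊕ Fin d)) n) :=
    Nat.card_congr (Equiv.subtypeEquivRight (by intro g; simp))
  rw [h2, Nat.card_eq_finsetCard] at h1
  rw [h1]
  congr 1
  simp [two_mul]

lemma card_tS (hd : 1 ≤ d) :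
    ((Finset.piAntidiag (Finset.univ : Finset (Fin d ⊕ Fin d)) N).filter
        (fun g => ∃ i, g (Sum.inl i) = 0)).card
      = (N + 2*d - 1).choose (2*d - 1) - (N + d - 1).choose (2*d - 1) := by
  classical
  set T := Finset.piAntidiag (Finset.univ : Finset (Fin d ⊕ Fin d)) N with hT
  have hmemT : ∀ g : Fin d ⊕ Fin d → ℕ, g ∈ T ↔ ∑ x, g x = N := by
    intro g; simp [hT]
  have hsume : ∑ x : Fin d ⊕ Fin d, Sum.elim (fun _ => (1:ℕ)) (fun _ => 0) x = d := by
    rw [Fintype.sum_sum_type]; simp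
  have hcardT : T.card = (N + 2*d - 1).choose (2*d - 1) := by
    rw [hT, card_piA]
    have hs := Nat.choose_symm (n := 2*d + N - 1) (k := 2*d - 1) (by omega)
    have he : 2*d + N - 1 - (2*d-1) = N := by omega
    rw [he] at hs
    rw [show N + 2*d - 1 = 2*d + N - 1 by omega]
    exact hs
  have hcardU : (T.filter (fun g => ¬ ∃ i, g (Sum.inl i) = 0)).card
      = (N + d - 1).choose (2*d - 1) := by
    by_cases hN : d ≤ N
    · have hbij : (T.filter (fun g => ¬ ∃ i, g (Sum.inl i) = 0)).card
          = (Finset.piAntidiag (Finset.univ : Finset (Fin d ⊕ Fin d)) (N - d)).card := by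
        apply Finset.card_bij' (i := fun g _ => fun x => g x - Sum.elim (fun _ => 1) (fun _ => 0) x)
          (j := fun h _ => fun x => h x + Sum.elim (fun _ => 1) (fun _ => 0) x)
        · -- left_inv
          intro g hg
          simp only [Finset.mem_filter, hmemT, not_exists] at hg
          funext x
          rcases x with i | j
          · have := hg.2 i; simp only [Sum.elim_inl]; omega
          · simp
        · -- right_inv
          intro h hh
          funext x
          rcases x with i | j <;> simp
        · -- hi
          intro g hg
          simp only [Finset.mem_filter, hmemT, not_exists] at hg
          obtain ⟨hsum, hpos⟩ := hg
          rw [Finset.mem_piAntidiag]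
          refine ⟨?_, fun x _ => Finset.mem_univ x⟩
          rw [Finset.sum_tsub_distrib]
          · rw [hsum, hsume]
          · rintro (i | j) _
            · simpa using Nat.one_le_iff_ne_zero.2 (hpos i)
            · simp
        · -- hj
          intro h hh
          simp only [Finset.mem_piAntidiag, Finset.mem_univ, implies_true, and_true] at hh
          simp only [Finset.mem_filter, hmemT, not_exists]
          refine ⟨?_, fun i => by simp⟩
          rw [Finset.sum_add_distrib, hsume, hh]
          omega
      rw [hbij, card_piA]
      clear hbij
      have hs := Nat.choose_symm (n := 2*d + (N-d) - 1) (k := 2*d - 1) (by omega)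
      have he : 2*d + (N-d) - 1 - (2*d-1) = N - d := by omega
      rw [he] at hs
      rw [show N + d - 1 = 2*d + (N-d) - 1 by omega]
      exact hs
    · push_neg at hN
      have h0 : (T.filter (fun g => ¬ ∃ i, g (Sum.inl i) = 0)).card = 0 := by
        rw [Finset.card_eq_zero, Finset.filter_eq_empty_iff]
        intro g hg
        rw [hmemT] at hg
        push_neg
        by_contra hc
        push_neg at hc
        have hd' : d ≤ ∑ x : Fin d ⊕ Fin d, g x := by
          rw [Fintype.sum_sum_type]
          calc d = ∑ _i : Fin d, 1 := by simp
          _ ≤ ∑ i, g (Sum.inl i) := Finset.sum_le_sum (fun i _ => Nat.one_le_iff_ne_zero.2 (hc i))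
          _ ≤ _ := Nat.le_add_right _ _
        omega
      rw [h0, eq_comm, Nat.choose_eq_zero_iff]
      clear h0
      omega
  have hpart := Finset.card_filter_add_card_filter_not
    (s := T) (p := fun g => ∃ i, g (Sum.inl i) = 0)
  have h2 : (T.filter (fun g => ∃ i, g (Sum.inl i) = 0)).card + (N + d - 1).choose (2*d - 1)
      = (N + 2*d - 1).choose (2*d - 1) := by
    rw [← hcardU, ← hcardT]
    exact hpart
  exact Nat.eq_sub_of_add_eq h2

end


lemma exchange {d N : ℕ} (A : Matrix (Fin d) (Fin d) ℕ)
    (hA : ∀ σ : Equiv.Perm (Fin d), ∑ i, A i (σ i) = N) {i k : Fin d} (j l : Fin d)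
    (hik : i ≠ k) : A i j + A k l = A i l + A k j := by
  by_cases hjl : j = l
  · subst hjl; rfl
  · set σ₁ := Equiv.swap i j with hσ₁
    set σ := σ₁.trans (Equiv.swap l (σ₁ k)) with hσ
    have hσ₁i : σ₁ i = j := Equiv.swap_apply_left i j
    have hjne : j ≠ σ₁ k := by
      intro h
      exact hik (σ₁.injective (hσ₁i.trans h))
    have hσi : σ i = j := by
      rw [hσ, Equiv.trans_apply, hσ₁i]
      exact Equiv.swap_apply_of_ne_of_ne hjl hjne
    have hσk : σ k = l := by
      rw [hσ, Equiv.trans_apply]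
      exact Equiv.swap_apply_right l (σ₁ k)
    set τ := σ.trans (Equiv.swap j l) with hτ
    have hτi : τ i = l := by rw [hτ, Equiv.trans_apply, hσi]; exact Equiv.swap_apply_left j l
    have hτk : τ k = j := by rw [hτ, Equiv.trans_apply, hσk]; exact Equiv.swap_apply_right j l
    have hτx : ∀ x, x ≠ i → x ≠ k → τ x = σ x := by
      intro x hxi hxk
      rw [hτ, Equiv.trans_apply]
      apply Equiv.swap_apply_of_ne_of_ne
      · rw [← hσi]; exact fun h => hxi (σ.injective h)
      · rw [← hσk]; exact fun h => hxk (σ.injective h)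
    have h1 := hA σ
    have h2 := hA τ
    have hki : k ∈ (Finset.univ : Finset (Fin d)).erase i :=
      Finset.mem_erase.2 ⟨Ne.symm hik, Finset.mem_univ k⟩
    rw [← Finset.add_sum_erase _ _ (Finset.mem_univ i),
      ← Finset.add_sum_erase _ _ hki] at h1 h2
    have hrest : ∑ x ∈ ((Finset.univ : Finset (Fin d)).erase i).erase k, A x (τ x)
        = ∑ x ∈ ((Finset.univ : Finset (Fin d)).erase i).erase k, A x (σ x) := by
      apply Finset.sum_congr rfl
      intro x hx
      rw [hτx x (Finset.mem_erase.1 (Finset.mem_of_mem_erase hx)).1 (Finset.mem_erase.1 hx).1]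
    rw [hσi, hσk] at h1
    rw [hτi, hτk, hrest] at h2
    omega

lemma card_M (d N : ℕ) (hd : 1 ≤ d) :
    Nat.card {A : Matrix (Fin d) (Fin d) ℕ |
        ∀ σ : Equiv.Perm (Fin d), ∑ i, A i (σ i) = N}
      = ((Finset.piAntidiag (Finset.univ : Finset (Fin d ⊕ Fin d)) N).filter
          (fun g => ∃ i, g (Sum.inl i) = 0)).card := by
  classical
  rw [← Nat.card_eq_finsetCard]
  apply Nat.card_congr
  symm
  have key : ∀ g : Fin d ⊕ Fin d → ℕ,
      g ∈ (Finset.piAntidiag (Finset.univ : Finset (Fin d ⊕ Fin d)) N).filter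
          (fun g => ∃ i, g (Sum.inl i) = 0) ↔
        (∑ x, g x = N ∧ ∃ i, g (Sum.inl i) = 0) := by
    intro g; simp [Finset.mem_piAntidiag]
  refine Equiv.ofBijective
    (fun g => ⟨fun i j => g.1 (Sum.inl i) + g.1 (Sum.inr j), ?_⟩) ⟨?_, ?_⟩
  · -- membership in the matrix set
    obtain ⟨hsum, _⟩ := (key g.1).1 g.2
    intro σ
    simp only [Set.mem_setOf_eq]
    rw [Finset.sum_add_distrib]
    rw [Equiv.sum_comp σ (fun j => g.1 (Sum.inr j))]
    rw [← Fintype.sum_sum_type]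
    exact hsum
  · -- injective
    rintro ⟨g, hg⟩ ⟨g', hg'⟩ hgg
    obtain ⟨hsum, z, hz⟩ := (key g).1 hg
    obtain ⟨hsum', z', hz'⟩ := (key g').1 hg'
    simp only [Subtype.mk.injEq] at hgg ⊢
    have hent : ∀ i j, g (Sum.inl i) + g (Sum.inr j) = g' (Sum.inl i) + g' (Sum.inr j) := by
      intro i j
      exact congrArg (fun M : Matrix (Fin d) (Fin d) ℕ => M i j) (congrArg Subtype.val hgg)
    have hzz' : g (Sum.inl z') = 0 ∧ g' (Sum.inl z) = 0 := by
      have h1 := hent z ⟨0, hd⟩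
      have h2 := hent z' ⟨0, hd⟩
      omega
    funext x
    rcases x with i | j
    · have h1 := hent i ⟨0, hd⟩
      have h2 := hent z ⟨0, hd⟩
      omega
    · have h1 := hent z' j
      omega
  · -- surjective
    rintro ⟨A, hA⟩
    simp only [Set.mem_setOf_eq] at hA
    have hne : (Finset.univ : Finset (Fin d)).Nonempty := ⟨⟨0, hd⟩, Finset.mem_univ _⟩
    obtain ⟨i0, -, hi0⟩ := Finset.exists_min_image Finset.univ (fun i => A i ⟨0, hd⟩) hne
    set j0 : Fin d := ⟨0, hd⟩ with hj0
    have hdecomp : ∀ i j, A i j = (A i j0 - A i0 j0) + A i0 j := by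
      intro i j
      by_cases hii : i = i0
      · subst hii; simp
      · have := exchange A hA (i := i) (k := i0) j j0 hii
        have hle : A i0 j0 ≤ A i j0 := hi0 i (Finset.mem_univ i)
        omega
    refine ⟨⟨fun x => Sum.elim (fun i => A i j0 - A i0 j0) (fun j => A i0 j) x, ?_⟩, ?_⟩
    · rw [key]
      constructor
      · rw [Fintype.sum_sum_type]
        simp only [Sum.elim_inl, Sum.elim_inr]
        have := hA (Equiv.refl (Fin d))
        simp only [Equiv.refl_apply] at this
        rw [← this]
        rw [← Finset.sum_add_distrib]
        apply Finset.sum_congr rfl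
        intro i _
        exact (hdecomp i i).symm
      · exact ⟨i0, by simp⟩
    · apply Subtype.ext
      funext i j
      simp only [Sum.elim_inl, Sum.elim_inr]
      exact (hdecomp i j).symm


end Stmt11Aux

theorem stmt_11 (d N : ℕ) (hd : 1 ≤ d) :
    (Nat.card {A : Matrix (Fin d) (Fin d) ℕ |
        ∀ σ : Equiv.Perm (Fin d), ∑ i, A i (σ i) = N} : ℤ)
      = ∑ k ∈ Finset.Icc 1 d, (-1 : ℤ) ^ (k - 1) * (Nat.choose d k) *
          (Nat.choose (N + 2 * d - k - 1) (2 * d - k - 1)) := by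
  have hM : Nat.card {A : Matrix (Fin d) (Fin d) ℕ |
        ∀ σ : Equiv.Perm (Fin d), ∑ i, A i (σ i) = N}
      = (N + 2*d - 1).choose (2*d - 1) - (N + d - 1).choose (2*d - 1) :=
    (Stmt11Aux.card_M d N hd).trans (Stmt11Aux.card_tS d N hd)
  have halt0 := Stmt11Aux.alt_sum d N (2*d-1) (by clear hM; omega)
  have hle : (N + d - 1).choose (2*d - 1) ≤ (N + 2*d - 1).choose (2*d - 1) :=
    Nat.choose_le_choose _ (by clear hM halt0; omega)
  rw [hM, Nat.cast_sub hle]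
  rw [Finset.sum_range_succ'] at halt0
  have hIcc : ∑ k ∈ Finset.Icc 1 d, (-1:ℤ)^(k-1) * (d.choose k) * ((N + 2*d - k - 1).choose (2*d - k - 1))
      = ∑ k ∈ Finset.range d, (-1:ℤ)^k * (d.choose (k+1)) * ((N + (2*d-1 - (k+1))).choose (2*d-1 - (k+1))) := by
    rw [← Finset.Ico_add_one_right_eq_Icc, Finset.sum_Ico_eq_sum_range]
    have hdd : d + 1 - 1 = d := by clear hM halt0; omega
    rw [hdd]
    apply Finset.sum_congr rfl
    intro k hk
    have hk' : k < d := Finset.mem_range.1 hk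
    have e1 : 1 + k - 1 = k := by clear hM halt0; omega
    have e2 : 1 + k = k + 1 := by clear hM halt0; omega
    have e3 : N + 2*d - (k+1) - 1 = N + (2*d-1 - (k+1)) := by clear hM halt0 hk; omega
    have e4 : 2*d - (k+1) - 1 = 2*d-1 - (k+1) := by clear hM halt0 hk; omega
    rw [e1, e2, e3, e4]
  rw [hIcc]
  have hmid : ∑ k ∈ Finset.range d, (-1:ℤ)^(k+1) * (d.choose (k+1)) * ((N + (2*d-1 - (k+1))).choose (2*d-1 - (k+1)))
      = -∑ k ∈ Finset.range d, (-1:ℤ)^k * (d.choose (k+1)) * ((N + (2*d-1 - (k+1))).choose (2*d-1 - (k+1))) := by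
    rw [← Finset.sum_neg_distrib]
    apply Finset.sum_congr rfl
    intro k _
    ring
  rw [hmid] at halt0
  have hg0 : ((-1:ℤ))^0 * ((d.choose 0 : ℕ) : ℤ) * (((N + (2*d-1 - 0)).choose (2*d-1 - 0) : ℕ) : ℤ)
      = ((N + 2*d - 1).choose (2*d-1) : ℤ) := by
    have : N + (2*d-1 - 0) = N + 2*d - 1 := by clear hM halt0; omega
    rw [this]
    simp
  rw [hg0] at halt0
  have hB : N + (2*d-1) - d = N + d - 1 := by clear hM halt0; omega
  rw [hB] at halt0
  linarith [halt0]
end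

section
/- For all integers d ≥ 1 and N ≥ 0, ∑_{k=1}^{d} (−1)^{k−1} C(d,k) C(N + 2d − k − 1, 2d − k − 1) = C(N+2d−1, 2d−1) − C(N+d−1, 2d−1). -/
lemma aux12 (N : ℕ) : ∀ (d a : ℕ),
    ∑ j ∈ Finset.range (d+1), (-1:ℤ)^j * (Nat.choose d j) * (Nat.choose (a+j) N)
      = (-1)^d * (if d ≤ N then ((Nat.choose a (N-d)) : ℤ) else 0) := by
  intro d
  induction d with
  | zero => intro a; simp
  | succ d ih =>
    intro a
    have h2 : ∑ j ∈ Finset.range (d+1), (-1:ℤ)^(j+1) * (Nat.choose d (j+1)) * (Nat.choose (a+(j+1)) N)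
        = ∑ j ∈ Finset.range (d+1), (-1:ℤ)^j * (Nat.choose d j) * (Nat.choose (a+j) N)
          - (Nat.choose a N : ℤ) := by
      have := Finset.sum_range_succ' (fun j => (-1:ℤ)^j * (Nat.choose d j) * (Nat.choose (a+j) N)) (d+1)
      rw [Finset.sum_range_succ] at this
      simp only [Nat.choose_succ_self, Nat.cast_zero, mul_zero, zero_mul, add_zero,
        pow_zero, Nat.choose_zero_right, Nat.cast_one, one_mul, Nat.add_zero] at this
      linarith [this]
    have hsplit : ∑ j ∈ Finset.range (d+2), (-1:ℤ)^j * (Nat.choose (d+1) j) * (Nat.choose (a+j) N)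
        = (∑ j ∈ Finset.range (d+1), (-1:ℤ)^j * (Nat.choose d j) * (Nat.choose (a+j) N))
          - (∑ j ∈ Finset.range (d+1), (-1:ℤ)^j * (Nat.choose d j) * (Nat.choose ((a+1)+j) N)) := by
      rw [Finset.sum_range_succ' _ (d+1)]
      have h1 : ∀ j ∈ Finset.range (d+1),
          (-1:ℤ)^(j+1) * (Nat.choose (d+1) (j+1)) * (Nat.choose (a+(j+1)) N)
            = (-1:ℤ)^(j+1) * (Nat.choose d (j+1)) * (Nat.choose (a+(j+1)) N)
              + (-((-1:ℤ)^j * (Nat.choose d j) * (Nat.choose ((a+1)+j) N))) := by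
        intro j _
        have hn : (a+1)+j = a+(j+1) := by omega
        rw [hn, Nat.choose_succ_succ]
        push_cast
        ring
      rw [Finset.sum_congr rfl h1, Finset.sum_add_distrib, h2]
      simp only [Finset.sum_neg_distrib, pow_zero, Nat.choose_zero_right, Nat.cast_one,
        one_mul, Nat.add_zero]
      ring
    rw [hsplit, ih a, ih (a+1)]
    by_cases h : d + 1 ≤ N
    · have hd : d ≤ N := by omega
      simp only [h, hd, if_true]
      have hs : N - d = (N - (d+1)) + 1 := by omega
      rw [hs, Nat.choose_succ_succ]
      push_cast
      ring
    · by_cases h' : d ≤ N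
      · have hdN : d = N := by omega
        simp only [h, h', if_true, if_false]
        subst hdN
        simp
      · simp [h, h']

theorem stmt_12 (d N : ℕ) (hd : 1 ≤ d) :
    ∑ k ∈ Finset.Icc 1 d, (-1 : ℤ) ^ (k - 1) * (Nat.choose d k) *
        (Nat.choose (N + 2 * d - k - 1) (2 * d - k - 1))
      = (Nat.choose (N + 2 * d - 1) (2 * d - 1) : ℤ)
        - (Nat.choose (N + d - 1) (2 * d - 1) : ℤ) := by
  set f : ℕ → ℤ := fun k => (-1:ℤ)^k * (Nat.choose d k) *
    (Nat.choose (N + 2*d - k - 1) (2*d - k - 1)) with hf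
  have hfull : ∑ k ∈ Finset.range (d+1), f k = (Nat.choose (N+d-1) (2*d-1) : ℤ) := by
    rw [← Finset.sum_range_reflect]
    have hcong : ∀ j ∈ Finset.range (d+1), f (d + 1 - 1 - j)
        = (-1:ℤ)^d * ((-1:ℤ)^j * (Nat.choose d j) * (Nat.choose ((N+d-1)+j) N)) := by
      intro j hj
      have hjd : j ≤ d := by simpa using Nat.lt_succ_iff.mp (Finset.mem_range.mp hj)
      have e0 : d + 1 - 1 - j = d - j := by omega
      have e1 : N + 2*d - (d - j) - 1 = (N+d-1)+j := by omega
      have e2 : 2*d - (d - j) - 1 = ((N+d-1)+j) - N := by omega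
      have e3 : Nat.choose d (d - j) = Nat.choose d j := Nat.choose_symm hjd
      have e4 : Nat.choose ((N+d-1)+j) (((N+d-1)+j) - N) = Nat.choose ((N+d-1)+j) N :=
        Nat.choose_symm (by omega)
      have e5 : (-1:ℤ)^(d-j) = (-1)^d * (-1)^j := by
        have : (-1:ℤ)^(d-j) * (-1)^j = (-1)^d := by
          rw [← pow_add]; congr 1; omega
        have h2 : ((-1:ℤ)^j) * ((-1:ℤ)^j) = 1 := by
          rw [← pow_add, ← two_mul, pow_mul]; norm_num
        calc (-1:ℤ)^(d-j) = (-1:ℤ)^(d-j) * ((-1)^j * (-1)^j) := by rw [h2, mul_one]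
          _ = ((-1:ℤ)^(d-j) * (-1)^j) * (-1)^j := by ring
          _ = (-1)^d * (-1)^j := by rw [this]
      simp only [hf, e0, e1, e2, e3, e4, e5]
      ring
    rw [Finset.sum_congr rfl hcong, ← Finset.mul_sum, aux12 N d (N+d-1)]
    by_cases h : d ≤ N
    · have e6 : Nat.choose (N+d-1) (N-d) = Nat.choose (N+d-1) (2*d-1) := by
        have : N - d = (N+d-1) - (2*d-1) := by omega
        rw [this, Nat.choose_symm (by omega)]
      simp only [h, if_true, e6]
      rw [← mul_assoc, ← pow_add, ← two_mul, pow_mul]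
      norm_num
    · have e7 : Nat.choose (N+d-1) (2*d-1) = 0 := Nat.choose_eq_zero_of_lt (by omega)
      simp [h, e7]
  have hpeel : ∑ k ∈ Finset.range (d+1), f k
      = f 0 + ∑ i ∈ Finset.range d, f (1+i) := by
    rw [Finset.sum_range_succ' f d]
    simp only [add_comm 1]
    ring
  have hf0 : f 0 = (Nat.choose (N + 2*d - 1) (2*d-1) : ℤ) := by
    simp [hf]
  have hIcc : ∑ k ∈ Finset.Icc 1 d, (-1 : ℤ) ^ (k - 1) * (Nat.choose d k) *
        (Nat.choose (N + 2 * d - k - 1) (2 * d - k - 1))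
      = ∑ i ∈ Finset.range d, (-(f (1+i))) := by
    have : Finset.Icc 1 d = Finset.Ico 1 (d+1) := by
      rw [Finset.Ico_add_one_right_eq_Icc]
    rw [this, Finset.sum_Ico_eq_sum_range]
    apply Finset.sum_congr (by simp)
    intro i _
    simp only [hf]
    have : (1 + i) - 1 = i := by omega
    rw [this, pow_add]
    ring
  rw [hIcc]
  have := hfull
  rw [hpeel, hf0] at this
  rw [Finset.sum_neg_distrib]
  linarith [this]
end

section
/- For all integers d ≥ 1 and N ≥ 1, ∑_{m=1}^{2d−1} [C(2d,m) − C(d, m−d)] C(N−1, m−1) = C(N+2d−1, 2d−1) − C(N+d−1, 2d−1). -/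
open Finset

lemma myV (a b c : ℕ) (h : c ≤ b) :
    ∑ t ∈ range (a + 1), a.choose t * b.choose (t + c) = (a + b).choose (b - c) := by
  rw [Nat.add_choose_eq, Finset.Nat.sum_antidiagonal_eq_sum_range_succ_mk]
  have hL1 : min a (b - c) + 1 ≤ a + 1 := by omega
  have hL2 : min a (b - c) + 1 ≤ b - c + 1 := by omega
  calc ∑ t ∈ range (a + 1), a.choose t * b.choose (t + c)
      = ∑ t ∈ range (min a (b - c) + 1), a.choose t * b.choose (t + c) := by
        symm
        apply Finset.sum_subset (Finset.range_subset_range.2 hL1)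
        intro t ht hnt
        simp only [mem_range] at ht hnt
        have : b < t + c := by omega
        rw [Nat.choose_eq_zero_of_lt this, mul_zero]
    _ = ∑ t ∈ range (min a (b - c) + 1), a.choose t * b.choose (b - c - t) := by
        apply Finset.sum_congr rfl
        intro t ht
        simp only [mem_range] at ht
        have h1 : t + c ≤ b := by omega
        have h2 : b - c - t = b - (t + c) := by omega
        rw [h2, Nat.choose_symm h1]
    _ = ∑ i ∈ range (b - c + 1), a.choose i * b.choose (b - c - i) := by
        apply Finset.sum_subset (Finset.range_subset_range.2 hL2)
        intro t ht hnt
        simp only [mem_range] at ht hnt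
        have : a < t := by omega
        rw [Nat.choose_eq_zero_of_lt this, zero_mul]

lemma myV2 (a b : ℕ) (ha : 1 ≤ a) :
    ∑ k ∈ range a, a.choose (k + 1) * b.choose k = (a + b).choose (b + 1) := by
  rw [Nat.add_choose_eq, Finset.Nat.sum_antidiagonal_eq_sum_range_succ_mk]
  rw [Finset.sum_range_succ' (fun i => a.choose i * b.choose (b + 1 - i)) (b + 1)]
  have h0 : a.choose 0 * b.choose (b + 1 - 0) = 0 := by
    simp [Nat.choose_eq_zero_of_lt (Nat.lt_succ_self b)]
  rw [h0, add_zero]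
  have hL1 : min (a - 1) b + 1 ≤ a := by omega
  have hL2 : min (a - 1) b + 1 ≤ b + 1 := by omega
  calc ∑ k ∈ range a, a.choose (k + 1) * b.choose k
      = ∑ k ∈ range (min (a - 1) b + 1), a.choose (k + 1) * b.choose k := by
        symm
        apply Finset.sum_subset (Finset.range_subset_range.2 hL1)
        intro t ht hnt
        simp only [mem_range] at ht hnt
        have : b < t := by omega
        rw [Nat.choose_eq_zero_of_lt this, mul_zero]
    _ = ∑ k ∈ range (min (a - 1) b + 1), a.choose (k + 1) * b.choose (b + 1 - (k + 1)) := by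
        apply Finset.sum_congr rfl
        intro t ht
        simp only [mem_range] at ht
        have h1 : t ≤ b := by omega
        have h2 : b + 1 - (t + 1) = b - t := by omega
        rw [h2, Nat.choose_symm h1]
    _ = ∑ i ∈ range (b + 1), a.choose (i + 1) * b.choose (b + 1 - (i + 1)) := by
        apply Finset.sum_subset (Finset.range_subset_range.2 hL2)
        intro t ht hnt
        simp only [mem_range] at ht hnt
        have : a < t + 1 := by omega
        rw [Nat.choose_eq_zero_of_lt this, zero_mul]

lemma myA (d N : ℕ) (hd : 1 ≤ d) (hN : 1 ≤ N) :
    ∑ m ∈ Icc 1 (2 * d), (2 * d).choose m * (N - 1).choose (m - 1)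
      = (N + 2 * d - 1).choose (2 * d - 1) := by
  rw [← Finset.Ico_add_one_right_eq_Icc, Finset.sum_Ico_eq_sum_range]
  have h1 : 2 * d + 1 - 1 = 2 * d := by omega
  rw [h1]
  have h2 : ∀ k ∈ range (2 * d), (2 * d).choose (1 + k) * (N - 1).choose (1 + k - 1)
      = (2 * d).choose (k + 1) * (N - 1).choose k := by
    intro k _
    congr 1 <;> congr 1 <;> omega
  rw [Finset.sum_congr rfl h2, myV2 (2 * d) (N - 1) (by omega)]
  have h3 : 2 * d + (N - 1) = N + 2 * d - 1 := by omega
  have h4 : (N - 1) + 1 = N := by omega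
  rw [h3, h4]
  have h5 : N ≤ N + 2 * d - 1 := by omega
  have h6 : N + 2 * d - 1 - N = 2 * d - 1 := by omega
  rw [← Nat.choose_symm h5, h6]

lemma myB (d N : ℕ) (hd : 1 ≤ d) (hN : 1 ≤ N) :
    ∑ m ∈ Icc 1 (2 * d), (if d ≤ m then d.choose (m - d) else 0) * (N - 1).choose (m - 1)
      = (N + d - 1).choose (2 * d - 1) := by
  have hsub : Icc d (2 * d) ⊆ Icc 1 (2 * d) := by
    intro x hx; simp only [mem_Icc] at *; omega
  rw [← Finset.sum_subset hsub (by
    intro x hx hnx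
    simp only [mem_Icc] at hx hnx
    have : ¬ d ≤ x := by omega
    rw [if_neg this, zero_mul])]
  have hcongr : ∀ m ∈ Icc d (2 * d),
      (if d ≤ m then d.choose (m - d) else 0) * (N - 1).choose (m - 1)
        = d.choose (m - d) * (N - 1).choose (m - 1) := by
    intro m hm
    simp only [mem_Icc] at hm
    rw [if_pos hm.1]
  rw [Finset.sum_congr rfl hcongr]
  rw [← Finset.Ico_add_one_right_eq_Icc, Finset.sum_Ico_eq_sum_range]
  have h1 : 2 * d + 1 - d = d + 1 := by omega
  rw [h1]
  have h2 : ∀ t ∈ range (d + 1), d.choose (d + t - d) * (N - 1).choose (d + t - 1)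
      = d.choose t * (N - 1).choose (d + t - 1) := by
    intro t _; congr 2; omega
  rw [Finset.sum_congr rfl h2]
  by_cases hNd : d ≤ N
  · have h3 : ∀ t ∈ range (d + 1), d.choose t * (N - 1).choose (d + t - 1)
        = d.choose t * (N - 1).choose (t + (d - 1)) := by
      intro t _; congr 2; omega
    rw [Finset.sum_congr rfl h3, myV d (N - 1) (d - 1) (by omega)]
    have h4 : d + (N - 1) = N + d - 1 := by omega
    have h5 : N - 1 - (d - 1) = N - d := by omega
    rw [h4, h5]
    have h6 : 2 * d - 1 ≤ N + d - 1 := by omega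
    have h7 : N + d - 1 - (2 * d - 1) = N - d := by omega
    rw [← Nat.choose_symm h6, h7]
  · have hz : ∀ t ∈ range (d + 1), d.choose t * (N - 1).choose (d + t - 1) = 0 := by
      intro t _
      have : N - 1 < d + t - 1 := by omega
      rw [Nat.choose_eq_zero_of_lt this, mul_zero]
    rw [Finset.sum_eq_zero hz, Nat.choose_eq_zero_of_lt (by omega : N + d - 1 < 2 * d - 1)]

theorem stmt_13 (d N : ℕ) (hd : 1 ≤ d) (hN : 1 ≤ N) :
    ∑ m ∈ Finset.Icc 1 (2 * d - 1),
        ((Nat.choose (2 * d) m : ℤ) - (if d ≤ m then (Nat.choose d (m - d) : ℤ) else 0)) *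
          (Nat.choose (N - 1) (m - 1) : ℤ)
      = (Nat.choose (N + 2 * d - 1) (2 * d - 1) : ℤ)
        - (Nat.choose (N + d - 1) (2 * d - 1) : ℤ) := by
  set F : ℕ → ℤ := fun m =>
    ((Nat.choose (2 * d) m : ℤ) - (if d ≤ m then (Nat.choose d (m - d) : ℤ) else 0)) *
      (Nat.choose (N - 1) (m - 1) : ℤ) with hF
  have htop : F (2 * d) = 0 := by
    have h1 : 2 * d - d = d := by omega
    simp [hF, h1, Nat.choose_self, if_pos (by omega : d ≤ 2 * d)]
  have hext : ∑ m ∈ Finset.Icc 1 (2 * d), F m = ∑ m ∈ Finset.Icc 1 (2 * d - 1), F m := by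
    have h2d : 2 * d = (2 * d - 1) + 1 := by omega
    rw [h2d, Finset.sum_Icc_succ_top (by omega), ← h2d, htop, add_zero]
  rw [← hext]
  have hsplit : ∀ m, F m =
      (((2 * d).choose m * (N - 1).choose (m - 1) : ℕ) : ℤ)
        - (((if d ≤ m then d.choose (m - d) else 0) * (N - 1).choose (m - 1) : ℕ) : ℤ) := by
    intro m
    simp only [hF]
    split_ifs <;> push_cast <;> ring
  rw [Finset.sum_congr rfl (fun m _ => hsplit m), Finset.sum_sub_distrib,
    ← Nat.cast_sum, ← Nat.cast_sum, myA d N hd hN, myB d N hd hN]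
end

section
/- A d×d matrix A with nonnegative integer entries has all permutation-diagonal sums equal to N if and only if there exist nonnegative integers μ_1,...,μ_d and λ_1,...,λ_d with ∑μ_i + ∑λ_j = N and A_{ij} = μ_i + λ_j for all i,j. -/
theorem stmt_14 (d N : ℕ) (hd : 2 ≤ d) (A : Matrix (Fin d) (Fin d) ℕ) :
    (∀ σ : Equiv.Perm (Fin d), ∑ i, A i (σ i) = N) ↔
      ∃ mu lam : Fin d → ℕ, (∑ i, mu i) + (∑ j, lam j) = N ∧
        ∀ i j, A i j = mu i + lam j := by
  constructor
  · intro h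
    -- exchange identity
    have exch : ∀ i i' j j' : Fin d, i ≠ i' → j ≠ j' →
        A i j + A i' j' = A i j' + A i' j := by
      intro i i' j j' hii hjj
      -- build π with π i = j, π i' = j'
      set α := Equiv.swap i j with hα
      set b := α i' with hb
      have hbj : b ≠ j := by
        intro hbj
        exact hii (α.injective (by rw [hb] at hbj; rw [hbj]; simp [hα]))
      set β := Equiv.swap b j' with hβ
      set π := α.trans β with hπ
      have hπi : π i = j := by
        simp [hπ, hα, hβ, Equiv.swap_apply_of_ne_of_ne hbj.symm hjj]
      have hπi' : π i' = j' := by simp [hπ, hβ, ← hb]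
      set τ := π.trans (Equiv.swap j j') with hτ
      have hτi : τ i = j' := by simp [hτ, hπi]
      have hτi' : τ i' = j := by simp [hτ, hπi']
      set s : Finset (Fin d) := Finset.univ \ {i, i'} with hs
      have huniv : (Finset.univ : Finset (Fin d)) = insert i (insert i' s) := by
        ext k; simp [hs]; tauto
      have hnot1 : i ∉ insert i' s := by simp [hs, hii]
      have hnot2 : i' ∉ s := by simp [hs]
      have hsum : ∀ ρ : Equiv.Perm (Fin d),
          ∑ k, A k (ρ k) = A i (ρ i) + (A i' (ρ i') + ∑ k ∈ s, A k (ρ k)) := by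
        intro ρ
        rw [huniv, Finset.sum_insert hnot1, Finset.sum_insert hnot2]
      have hcongr : ∑ k ∈ s, A k (τ k) = ∑ k ∈ s, A k (π k) := by
        apply Finset.sum_congr rfl
        intro k hk
        simp only [hs, Finset.mem_sdiff, Finset.mem_insert, Finset.mem_singleton] at hk
        have hkj : π k ≠ j := fun hc => hk.2 (Or.inl (π.injective (hc.trans hπi.symm)))
        have hkj' : π k ≠ j' := fun hc => hk.2 (Or.inr (π.injective (hc.trans hπi'.symm)))
        simp [hτ, Equiv.swap_apply_of_ne_of_ne hkj hkj']
      have h1 := hsum π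
      have h2 := hsum τ
      rw [h π] at h1
      rw [h τ] at h2
      rw [hπi, hπi'] at h1
      rw [hτi, hτi', hcongr] at h2
      omega
    have hd0 : 0 < d := by omega
    set i0 : Fin d := ⟨0, hd0⟩ with hi0
    obtain ⟨j0, _, hmin⟩ := Finset.exists_min_image Finset.univ (fun j => A i0 j)
      ⟨i0, Finset.mem_univ i0⟩
    refine ⟨fun i => A i j0, fun j => A i0 j - A i0 j0, ?_, ?_⟩
    · have hid := h (Equiv.refl (Fin d))
      simp only [Equiv.refl_apply] at hid
      rw [← Finset.sum_add_distrib]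
      rw [← hid]
      apply Finset.sum_congr rfl
      intro i _
      show A i j0 + (A i0 i - A i0 j0) = A i i
      have hm := hmin i (Finset.mem_univ i)
      by_cases hi : i = i0
      · subst hi; omega
      · by_cases hj : (i : Fin d) = j0
        · rw [hj]; omega
        · have := exch i i0 i j0 hi hj
          omega
    · intro i j
      show A i j = A i j0 + (A i0 j - A i0 j0)
      have hm := hmin j (Finset.mem_univ j)
      by_cases hi : i = i0
      · subst hi; omega
      · by_cases hj : j = j0
        · subst hj; omega
        · have := exch i i0 j j0 hi hj
          omega
  · rintro ⟨mu, lam, hsum, hA⟩ σ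
    simp only [hA]
    rw [Finset.sum_add_distrib, Equiv.sum_comp σ lam]
    exact hsum
end

section
/- The number of ways to write N as μ_1 + ... + μ_d + λ_1 + ... + λ_d with nonnegative integers such that min(μ_1,...,μ_d) = 0, counted via the resulting matrices A_{ij} = μ_i + λ_j, is in bijection with d×d nonnegative integer matrices all of whose permutation-diagonal sums equal N; moreover the representation with all column minima of A equal to λ_j and then row minima μ_i is unique. -/
open Finset

lemma rect_aux (d N : ℕ) (A : Matrix (Fin d) (Fin d) ℕ)
    (hA : ∀ σ : Equiv.Perm (Fin d), ∑ i, A i (σ i) = N)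
    (i k j l : Fin d) (hik : i ≠ k) (hjl : j ≠ l) :
    A i j + A k l = A i l + A k j := by
  set σ1 : Equiv.Perm (Fin d) := Equiv.swap i j with hσ1
  have h1i : σ1 i = j := Equiv.swap_apply_left i j
  have hkj : σ1 k ≠ j := by
    intro h; exact hik (σ1.injective (h1i.trans h.symm))
  set σ : Equiv.Perm (Fin d) := σ1.trans (Equiv.swap (σ1 k) l) with hσ
  have hσi : σ i = j := by
    simp only [hσ, Equiv.trans_apply, h1i]
    exact Equiv.swap_apply_of_ne_of_ne (Ne.symm hkj) hjl
  have hσk : σ k = l := by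
    simp only [hσ, Equiv.trans_apply]
    exact Equiv.swap_apply_left _ _
  set σ' : Equiv.Perm (Fin d) := σ.trans (Equiv.swap j l) with hσ'
  have hσ'i : σ' i = l := by simp [hσ', Equiv.trans_apply, hσi]
  have hσ'k : σ' k = j := by simp [hσ', Equiv.trans_apply, hσk]
  have hrest : ∀ m : Fin d, m ≠ i → m ≠ k → σ' m = σ m := by
    intro m hmi hmk
    have h1 : σ m ≠ j := fun h => hmi (σ.injective (h.trans hσi.symm))
    have h2 : σ m ≠ l := fun h => hmk (σ.injective (h.trans hσk.symm))
    simp [hσ', Equiv.trans_apply, Equiv.swap_apply_of_ne_of_ne h1 h2]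
  have hki : k ∈ (univ : Finset (Fin d)).erase i :=
    Finset.mem_erase.mpr ⟨Ne.symm hik, mem_univ k⟩
  have split : ∀ τ : Equiv.Perm (Fin d),
      ∑ m, A m (τ m) = A i (τ i) + (A k (τ k) +
        ∑ m ∈ ((univ : Finset (Fin d)).erase i).erase k, A m (τ m)) := by
    intro τ
    have e1 : ∑ m ∈ (univ : Finset (Fin d)).erase i, A m (τ m)
        = A k (τ k) + ∑ m ∈ ((univ : Finset (Fin d)).erase i).erase k, A m (τ m) :=
      (Finset.add_sum_erase _ (fun m => A m (τ m)) hki).symm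
    have e2 : ∑ m, A m (τ m)
        = A i (τ i) + ∑ m ∈ (univ : Finset (Fin d)).erase i, A m (τ m) :=
      (Finset.add_sum_erase _ (fun m => A m (τ m)) (mem_univ i)).symm
    rw [e2, e1]
  have hs1 := (split σ).symm.trans (hA σ)
  have hs2 := (split σ').symm.trans (hA σ')
  rw [hσi, hσk] at hs1
  rw [hσ'i, hσ'k] at hs2
  have hsum : ∑ m ∈ ((univ : Finset (Fin d)).erase i).erase k, A m (σ' m)
      = ∑ m ∈ ((univ : Finset (Fin d)).erase i).erase k, A m (σ m) := by
    apply Finset.sum_congr rfl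
    intro m hm
    have hm' := Finset.mem_erase.mp hm
    have hm'' := Finset.mem_erase.mp hm'.2
    rw [hrest m hm''.1 hm'.1]
  rw [hsum] at hs2
  omega

theorem stmt_15 (d N : ℕ) (hd : 2 ≤ d) :
    Function.Bijective
      (fun p : {p : (Fin d → ℕ) × (Fin d → ℕ) //
          (∑ i, p.1 i) + (∑ j, p.2 j) = N ∧ ∃ i, p.1 i = 0} =>
        (⟨fun i j => p.1.1 i + p.1.2 j, by
            intro σ
            have h1 : ∑ i, (p.1.1 i + p.1.2 (σ i))
                = (∑ i, p.1.1 i) + ∑ i, p.1.2 (σ i) := Finset.sum_add_distrib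
            have h2 : ∑ i, p.1.2 (σ i) = ∑ j, p.1.2 j :=
              Equiv.sum_comp σ p.1.2
            simpa [h1, h2] using p.2.1⟩ :
          {A : Matrix (Fin d) (Fin d) ℕ //
            ∀ σ : Equiv.Perm (Fin d), ∑ i, A i (σ i) = N})) := by
  constructor
  · -- injective
    rintro ⟨⟨μ, lam⟩, hp1, ip, hip⟩ ⟨⟨μ', lam'⟩, hq1, iq, hiq⟩ h
    have hmat : ∀ i j, μ i + lam j = μ' i + lam' j := by
      intro i j
      have := congrArg Subtype.val h
      exact congrFun (congrFun this i) j
    have hlam : ∀ j, lam j = lam' j := by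
      intro j
      have h1 := hmat ip j
      have h2 := hmat iq j
      have hip' : μ ip = 0 := hip
      have hiq' : μ' iq = 0 := hiq
      omega
    have hmu : ∀ i, μ i = μ' i := by
      intro i
      have h1 := hmat i ⟨0, by omega⟩
      have h2 := hlam ⟨0, by omega⟩
      omega
    apply Subtype.ext
    exact Prod.ext (funext hmu) (funext hlam)
  · -- surjective
    rintro ⟨A, hA⟩
    set i0 : Fin d := ⟨0, by omega⟩ with hi0
    obtain ⟨m, -, hm⟩ := Finset.exists_min_image (univ : Finset (Fin d))
      (fun i => A i i0) ⟨i0, mem_univ i0⟩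
    have hm' : ∀ i, A m i0 ≤ A i i0 := fun i => hm i (mem_univ i)
    set μ : Fin d → ℕ := fun i => A i i0 - A m i0 with hμ
    set lam : Fin d → ℕ := fun j => A m j with hlam
    have key : ∀ i j, μ i + lam j = A i j := by
      intro i j
      by_cases him : i = m
      · subst him; simp [hμ, hlam]
      by_cases hji : j = i0
      · subst hji; have := hm' i; simp only [hμ, hlam]; omega
      · have := rect_aux d N A hA i m j i0 him hji
        have := hm' i
        simp only [hμ, hlam]
        omega
    have hsum : (∑ i, μ i) + (∑ j, lam j) = N := by
      have h1 : ∑ i, (μ i + lam i) = (∑ i, μ i) + ∑ i, lam i :=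
        Finset.sum_add_distrib
      have h2 := hA 1
      simp only [Equiv.Perm.one_apply] at h2
      have h3 : ∑ i, (μ i + lam i) = ∑ i, A i i := by
        apply Finset.sum_congr rfl; intro i _; exact key i i
      omega
    refine ⟨⟨⟨μ, lam⟩, hsum, m, by simp [hμ]⟩, ?_⟩
    apply Subtype.ext
    funext i j
    exact key i j
end

section
/- A nonnegative d×d real matrix A satisfies ⟨A, P_σ⟩ = 1 for every permutation matrix P_σ if and only if A lies in the convex hull of {R_1,...,R_d, C_1,...,C_d}. -/
theorem stmt_17 (d : ℕ) (hd : 2 ≤ d)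
    (R C : Fin d → Matrix (Fin d) (Fin d) ℝ)
    (hR : ∀ i k l, R i k l = if k = i then 1 else 0)
    (hC : ∀ j k l, C j k l = if l = j then 1 else 0)
    (A : Matrix (Fin d) (Fin d) ℝ) (hpos : ∀ i j, 0 ≤ A i j) :
    (∀ σ : Equiv.Perm (Fin d),
        ∑ i, ∑ j, A i j * (if σ i = j then 1 else 0) = 1) ↔
      A ∈ convexHull ℝ (Set.range R ∪ Set.range C) := by
  haveI : NeZero d := ⟨by omega⟩
  have hsum : ∀ (B : Matrix (Fin d) (Fin d) ℝ) (σ : Equiv.Perm (Fin d)),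
      (∑ i, ∑ j, B i j * (if σ i = j then 1 else 0)) = ∑ i, B i (σ i) := by
    intro B σ
    refine Finset.sum_congr rfl fun i _ => ?_
    simp [mul_ite]
  constructor
  · intro h
    have h' : ∀ σ : Equiv.Perm (Fin d), ∑ i, A i (σ i) = 1 := by
      intro σ; rw [← hsum A σ]; exact h σ
    obtain ⟨i0, -, hi0⟩ := Finset.exists_min_image Finset.univ (fun i => A i 0)
      ⟨0, Finset.mem_univ 0⟩
    have key : ∀ i j, A i j = (A i 0 - A i0 0) + A i0 j := by
      intro i j
      by_cases hii : i = i0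
      · subst hii; ring
      by_cases hj : j = 0
      · subst hj; ring
      -- build σ with σ i = j, σ i0 = 0
      set f : Equiv.Perm (Fin d) := Equiv.swap i0 0 with hf
      have hfi : f i ≠ 0 := by
        intro h0
        have : f (f i) = f 0 := congrArg f h0
        rw [Equiv.swap_apply_self] at this
        have : i = i0 := by simpa [hf, Equiv.swap_apply_right] using this
        exact hii this
      set σ : Equiv.Perm (Fin d) := f.trans (Equiv.swap j (f i)) with hσ
      have hσi : σ i = j := by
        simp [hσ, Equiv.trans_apply, Equiv.swap_apply_right]
      have hσi0 : σ i0 = 0 := by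
        have hfi0 : f i0 = 0 := Equiv.swap_apply_left i0 0
        simp only [hσ, Equiv.trans_apply, hfi0]
        exact Equiv.swap_apply_of_ne_of_ne (Ne.symm hj) (Ne.symm hfi)
      set e : Equiv.Perm (Fin d) := Equiv.swap i i0 with he
      have h1 := h' σ
      have h2' : ∑ k, A k (σ (e k)) = 1 := by
        simpa [Equiv.trans_apply] using h' (e.trans σ)
      have h3 : ∑ k, A k (σ (e k)) = ∑ k, A (e k) (σ k) := by
        have := Equiv.sum_comp e (fun k => A (e k) (σ k))
        simpa [he, Equiv.swap_apply_self] using this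
      have h4 : ∑ k, A (e k) (σ k) = ∑ k, A k (σ k) :=
        (h3.symm.trans h2').trans h1.symm
      have h5 : ∑ k, (A (e k) (σ k) - A k (σ k)) = 0 := by
        rw [Finset.sum_sub_distrib, h4, sub_self]
      have h6 : ∑ k ∈ ({i, i0} : Finset (Fin d)),
          (A (e k) (σ k) - A k (σ k)) = 0 := by
        refine (Finset.sum_subset (Finset.subset_univ _) ?_).trans h5
        intro x _ hx
        simp only [Finset.mem_insert, Finset.mem_singleton, not_or] at hx
        rw [he, Equiv.swap_apply_of_ne_of_ne hx.1 hx.2, sub_self]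
      rw [Finset.sum_pair hii] at h6
      have hei : e i = i0 := Equiv.swap_apply_left i i0
      have hei0 : e i0 = i := Equiv.swap_apply_right i i0
      rw [hei, hei0, hσi, hσi0] at h6
      linarith
    set lam : Fin d → ℝ := fun i => A i 0 - A i0 0 with hlam
    set mu : Fin d → ℝ := fun j => A i0 j with hmu
    have hl : ∀ i, 0 ≤ lam i := by
      intro i
      have := hi0 i (Finset.mem_univ i)
      simp only [hlam]
      linarith
    have hm : ∀ j, 0 ≤ mu j := fun j => hpos i0 j
    have hsum1 : (∑ i, lam i) + ∑ j, mu j = 1 := by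
      have hid : ∑ i, A i i = 1 := by simpa using h' (Equiv.refl _)
      calc (∑ i, lam i) + ∑ j, mu j = ∑ i, (lam i + mu i) := by
            rw [Finset.sum_add_distrib]
        _ = ∑ i, A i i := Finset.sum_congr rfl fun i _ => (key i i).symm
        _ = 1 := hid
    set w : Fin d ⊕ Fin d → ℝ := Sum.elim lam mu with hw
    set z : Fin d ⊕ Fin d → Matrix (Fin d) (Fin d) ℝ := Sum.elim R C with hz
    have hwsum : ∑ p : Fin d ⊕ Fin d, w p = 1 := by
      rw [Fintype.sum_sum_type]
      simpa [hw] using hsum1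
    have hAeq : A = ∑ p : Fin d ⊕ Fin d, w p • z p := by
      ext k l
      rw [Matrix.sum_apply]
      simp only [Matrix.smul_apply, smul_eq_mul]
      rw [Fintype.sum_sum_type]
      simp only [hw, hz, Sum.elim_inl, Sum.elim_inr, hR, hC, mul_ite, mul_one,
        mul_zero]
      rw [Finset.sum_ite_eq, Finset.sum_ite_eq]
      simp only [Finset.mem_univ, if_true]
      exact key k l
    have hmem := Finset.centerMass_mem_convexHull (t := Finset.univ) (w := w)
      (z := z) (s := Set.range R ∪ Set.range C)
      (fun p _ => by cases p with
        | inl a => exact hl a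
        | inr b => exact hm b)
      (by rw [hwsum]; exact one_pos)
      (fun p _ => by cases p with
        | inl a => exact Or.inl ⟨a, rfl⟩
        | inr b => exact Or.inr ⟨b, rfl⟩)
    rwa [Finset.centerMass_eq_of_sum_1 _ _ hwsum, ← hAeq] at hmem
  · intro hA σ
    rw [hsum A σ]
    set f : Matrix (Fin d) (Fin d) ℝ →ₗ[ℝ] ℝ :=
      { toFun := fun B => ∑ i, B i (σ i)
        map_add' := fun B B' => by
          simp [Matrix.add_apply, Finset.sum_add_distrib]
        map_smul' := fun c B => by
          simp [Matrix.smul_apply, Finset.mul_sum] } with hfdef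
    have hsub : Set.range R ∪ Set.range C ⊆ f ⁻¹' {1} := by
      rintro B (⟨i, rfl⟩ | ⟨j, rfl⟩)
      · show f (R i) ∈ ({1} : Set ℝ)
        simp [hfdef, hR]
      · show f (C j) ∈ ({1} : Set ℝ)
        simp [hfdef, hC, Equiv.apply_eq_iff_eq_symm_apply]
    have := convexHull_min hsub ((convex_singleton (1 : ℝ)).linear_preimage f) hA
    simpa [hfdef] using this
end
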